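/- arXiv:1805.02454 — 4 statements merged into one kernel-verified Lean document; each statement's English description precedes it below -/
import Mathlib

section
/- Let q > 0, p > 2 and h ≥ 0. Then there exists a constant γ₀ > 0, depending only on p and q, such that for all real numbers a₁, a₂, b₁, b₂ (playing the roles of u(x), u(y), v(x), v(y)): ( |a₂ − a₁|^{p−2}(a₂ − a₁) − |b₂ − b₁|^{p−2}(b₂ − b₁) ) · ( ((a₂ − b₂ − h)₊)^q − ((a₁ − b₁ − h)₊)^q ) ≥ γ₀ · | ((a₂ − b₂ − h)₊)^{(q−1+p)/p} − ((a₁ − b₁ − h)₊)^{(q−1+p)/p} |^p, where s₊ = max(s,0) denotes the positive part. -/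
noncomputable section

open Set MeasureTheory

/-- A weighted graph: symmetric nonnegative weight, no loops, locally finite
(summable) weighted degree. -/
structure WG (V : Type*) where
  w : V → V → ℝ
  nonneg : ∀ x y, 0 ≤ w x y
  symm : ∀ x y, w x y = w y x
  loopless : ∀ x, w x x = 0
  locfin : ∀ x, Summable (w x)

namespace WG

variable {V : Type*} (g : WG V)

/-- The weighted degree `d_ω(x) = ∑_y ω(x,y)`. -/
def deg (x : V) : ℝ := ∑' y, g.w x y

/-- The underlying simple graph: `x ∼ y` iff `ω(x,y) > 0`. -/
def G : SimpleGraph V where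
  Adj x y := 0 < g.w x y
  symm := by
    constructor
    intro x y h
    rw [g.symm y x]
    exact h
  loopless := by
    constructor
    intro x h
    rw [g.loopless x] at h
    exact lt_irrefl 0 h

/-- The combinatorial graph distance. -/
def dist (x y : V) : ℕ := g.G.dist x y

/-- The ball `B_R(x₀)` for the combinatorial distance. -/
def ball (x₀ : V) (R : ℕ) : Set V := {x | g.dist x₀ x ≤ R}

/-- The weighted measure `μ_ω(U) = ∑_{x∈U} d_ω(x)`. -/
def mu (U : Set V) : ℝ := ∑' x : U, g.deg x

/-- The `q`-th power of the `ℓ^q(V)` norm: `∑_{x∈V} |f x|^q d_ω(x)`. -/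
def lqPow (q : ℝ) (f : V → ℝ) : ℝ := ∑' x, |f x| ^ q * g.deg x

/-- The `q`-th power of the `ℓ^q(U)` norm: `∑_{x∈U} |f x|^q d_ω(x)`. -/
def lqPowOn (q : ℝ) (U : Set V) (f : V → ℝ) : ℝ := ∑' x : U, |f x| ^ q * g.deg x

/-- The `ℓ^q(V)` norm. -/
def lqNorm (q : ℝ) (f : V → ℝ) : ℝ := (g.lqPow q f) ^ (1/q)

/-- The `ℓ^q(U)` norm. -/
def lqNormOn (q : ℝ) (U : Set V) (f : V → ℝ) : ℝ := (g.lqPowOn q U f) ^ (1/q)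

/-- Membership in `ℓ^q(V)` (absolute convergence of the defining sum). -/
def MemLq (q : ℝ) (f : V → ℝ) : Prop := Summable fun x => |f x| ^ q * g.deg x

/-- The discrete `p`-Laplacian. -/
def lapl (p : ℝ) (f : V → ℝ) (x : V) : ℝ :=
  (g.deg x)⁻¹ * ∑' y, |f y - f x| ^ (p - 2) * (f y - f x) * g.w x y

/-- A solution of `∂ₜ u = Δ_p u` on `V × (0,T)`: for each vertex, `u x` is `C¹`
on `[0,T]` and the equation holds pointwise on `(0,T)`. -/
def IsSol (p T : ℝ) (u : V → ℝ → ℝ) : Prop :=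
  (∀ x, ContDiffOn ℝ 1 (u x) (Icc 0 T)) ∧
  ∀ x t, t ∈ Ioo 0 T → HasDerivAt (u x) (g.lapl p (fun y => u y t) x) t

/-- A solution of `∂ₜ u = Δ_p u` on `V × (0,∞)`. -/
def IsSolInf (p : ℝ) (u : V → ℝ → ℝ) : Prop :=
  (∀ x, ContDiffOn ℝ 1 (u x) (Ici 0)) ∧
  ∀ x t, 0 < t → HasDerivAt (u x) (g.lapl p (fun y => u y t) x) t

/-- Class `L^∞(0,T; ℓ^q(V))`. -/
def BddLq (q T : ℝ) (u : V → ℝ → ℝ) : Prop :=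
  ∃ C : ℝ, ∀ t, 0 < t → t < T →
    g.MemLq q (fun x => u x t) ∧ g.lqPow q (fun x => u x t) ≤ C

/-- Class `L^∞(0,∞; ℓ^q(V))`. -/
def BddLqInf (q : ℝ) (u : V → ℝ → ℝ) : Prop :=
  ∃ C : ℝ, ∀ t, 0 < t →
    g.MemLq q (fun x => u x t) ∧ g.lqPow q (fun x => u x t) ≤ C

/-- The global Faber–Krahn inequality.  Note that if `f` vanishes outside `U`
then the sum of `|f y - f x|^p ω(x,y)` over `(U)₁ × (U)₁` coincides with the
sum over all of `V × V`, since nonzero terms require `x ∈ U` or `y ∈ U` and the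
other endpoint adjacent to it. -/
def FK (p : ℝ) (Λ : ℝ → ℝ) : Prop :=
  ∀ (U : Finset V) (f : V → ℝ), (∀ x, x ∉ U → f x = 0) →
    Λ (∑ x ∈ U, g.deg x) * ∑ x ∈ U, |f x| ^ p * g.deg x ≤
      ∑' x, ∑' y, |f y - f x| ^ p * g.w x y

end WG

/-- Structural assumptions on the Faber–Krahn function `Λ_p`: continuous,
decreasing, positive on `(0,∞)`, with `v ↦ Λ(v)⁻¹ v^{-p/N}` nondecreasing and
`v ↦ Λ(v)⁻¹ v^{-ϖ}` nonincreasing. -/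
def FKfun (p N ϖ : ℝ) (Λ : ℝ → ℝ) : Prop :=
  ContinuousOn Λ (Set.Ioi 0) ∧ StrictAntiOn Λ (Set.Ioi 0) ∧
  (∀ v, 0 < v → 0 < Λ v) ∧
  (∀ v₁ v₂, 0 < v₁ → v₁ ≤ v₂ → (Λ v₁)⁻¹ * v₁ ^ (-(p/N)) ≤ (Λ v₂)⁻¹ * v₂ ^ (-(p/N))) ∧
  (∀ v₁ v₂, 0 < v₁ → v₁ ≤ v₂ → (Λ v₂)⁻¹ * v₂ ^ (-ϖ) ≤ (Λ v₁)⁻¹ * v₁ ^ (-ϖ))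

/-- The scaling function `ψ_r(s) = s^{(p-2)/r} Λ(s⁻¹)`. -/
def psi (p r : ℝ) (Λ : ℝ → ℝ) (s : ℝ) : ℝ := s ^ ((p - 2)/r) * Λ s⁻¹

/-- `ψinv` is the inverse of `ψ_r`, assumed to be an increasing bijection of
`(0,∞)` onto itself. -/
def IsPsiInv (p r : ℝ) (Λ ψinv : ℝ → ℝ) : Prop :=
  StrictMonoOn (psi p r Λ) (Set.Ioi 0) ∧
  (∀ s, 0 < s → 0 < psi p r Λ s) ∧
  (∀ s, 0 < s → 0 < ψinv s) ∧
  (∀ s, 0 < s → psi p r Λ (ψinv s) = s) ∧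
  (∀ s, 0 < s → ψinv (psi p r Λ s) = s)

lemma bern9 {t β : ℝ} (ht0 : 0 ≤ t) (ht1 : t ≤ 1) (hβ : 0 < β) :
    1 - t ^ β ≤ max β 1 * (1 - t) := by
  rcases le_or_gt 1 β with hb | hb
  · have h := one_add_mul_self_le_rpow_one_add (s := t - 1) (by linarith) hb
    have he : (1 : ℝ) + (t - 1) = t := by ring
    rw [he] at h
    rw [max_eq_left hb]
    nlinarith
  · rw [max_eq_right hb.le, one_mul]
    rcases eq_or_lt_of_le ht0 with h0 | h0
    · rw [← h0, Real.zero_rpow hβ.ne']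
    · have h := Real.rpow_le_rpow_of_exponent_ge h0 ht1 hb.le
      rw [Real.rpow_one] at h
      linarith

lemma gap9 {s₁ s₂ β : ℝ} (hs₁ : 0 ≤ s₁) (hs : s₁ ≤ s₂) (hβ : 0 < β) :
    s₂ ^ β - s₁ ^ β ≤ max β 1 * (s₂ ^ (β - 1) * (s₂ - s₁)) := by
  rcases eq_or_lt_of_le (hs₁.trans hs) with h2 | h2
  · have h1 : s₁ = 0 := le_antisymm (h2 ▸ hs) hs₁
    rw [← h2, h1, Real.zero_rpow hβ.ne']
    simp
  · have ht0 : 0 ≤ s₁ / s₂ := div_nonneg hs₁ h2.le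
    have ht1 : s₁ / s₂ ≤ 1 := (div_le_one h2).mpr hs
    have h := bern9 ht0 ht1 hβ
    have h' := mul_le_mul_of_nonneg_left h (Real.rpow_nonneg h2.le β : (0:ℝ) ≤ s₂ ^ β)
    have e1 : s₂ ^ β * (1 - (s₁ / s₂) ^ β) = s₂ ^ β - s₁ ^ β := by
      rw [Real.div_rpow hs₁ h2.le]
      field_simp
    have e2 : s₂ ^ β * (max β 1 * (1 - s₁ / s₂)) = max β 1 * (s₂ ^ (β - 1) * (s₂ - s₁)) := by
      have e3 : s₂ ^ β = s₂ ^ (β - 1) * s₂ := by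
        rw [← Real.rpow_add_one h2.ne' (β - 1)]; ring_nf
      rw [e3]
      field_simp
    rw [e1, e2] at h'
    exact h'

lemma superadd9 {a b r : ℝ} (ha : 0 ≤ a) (hb : 0 ≤ b) (hr : 1 ≤ r) :
    a ^ r + b ^ r ≤ (a + b) ^ r := by
  have h := NNReal.add_rpow_le_rpow_add a.toNNReal b.toNNReal hr
  have h' := NNReal.coe_le_coe.mpr h
  push_cast [NNReal.coe_rpow] at h'
  rwa [Real.coe_toNNReal a ha, Real.coe_toNNReal b hb] at h'

lemma twopow9 {a b r : ℝ} (ha : 0 ≤ a) (hb : 0 ≤ b) (hr : 1 ≤ r) :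
    (a + b) ^ r ≤ 2 ^ (r - 1) * (a ^ r + b ^ r) := by
  have h := NNReal.rpow_add_le_mul_rpow_add_rpow a.toNNReal b.toNNReal hr
  have h' := NNReal.coe_le_coe.mpr h
  push_cast [NNReal.coe_rpow] at h'
  rwa [Real.coe_toNNReal a ha, Real.coe_toNNReal b hb] at h'


lemma oddpow9 {p : ℝ} (hp : 2 < p) {z : ℝ} (hz : 0 ≤ z) :
    |z| ^ (p - 2) * z = z ^ (p - 1) := by
  rw [abs_of_nonneg hz]
  rcases eq_or_lt_of_le hz with h0 | h0
  · rw [← h0, Real.zero_rpow (by linarith : p - 2 ≠ 0),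
      Real.zero_rpow (by linarith : p - 1 ≠ 0), mul_zero]
  · rw [← Real.rpow_add_one h0.ne' (p - 2)]; ring_nf

lemma ptmono9 {p : ℝ} (hp : 2 < p) {x y : ℝ} (hxy : y ≤ x) :
    2 ^ (2 - p) * (x - y) ^ (p - 1) ≤ |x| ^ (p - 2) * x - |y| ^ (p - 2) * y := by
  have hr : 1 ≤ p - 1 := by linarith
  have hc1 : (2 : ℝ) ^ (2 - p) ≤ 1 :=
    Real.rpow_le_one_of_one_le_of_nonpos one_le_two (by linarith)
  have hd : 0 ≤ x - y := by linarith
  have hdp : 0 ≤ (x - y) ^ (p - 1) := Real.rpow_nonneg hd _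
  rcases le_or_gt 0 y with hy | hy
  · have hx : 0 ≤ x := hy.trans hxy
    rw [oddpow9 hp hx, oddpow9 hp hy]
    have h := superadd9 hd hy hr
    have he : x - y + y = x := by ring
    rw [he] at h
    nlinarith
  · rcases le_or_gt x 0 with hx | hx
    · have e1 : |x| ^ (p - 2) * x = -((-x) ^ (p - 1)) := by
        have := oddpow9 hp (by linarith : (0:ℝ) ≤ -x)
        rw [abs_neg] at this
        nlinarith [this]
      have e2 : |y| ^ (p - 2) * y = -((-y) ^ (p - 1)) := by
        have := oddpow9 hp (by linarith : (0:ℝ) ≤ -y)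
        rw [abs_neg] at this
        nlinarith [this]
      rw [e1, e2]
      have h := superadd9 (show (0:ℝ) ≤ -y - -x by linarith) (show (0:ℝ) ≤ -x by linarith) hr
      have he : -y - -x + -x = -y := by ring
      rw [he] at h
      have he2 : -y - -x = x - y := by ring
      rw [he2] at h
      nlinarith
    · -- y < 0 < x
      rw [oddpow9 hp hx.le]
      have e2 : |y| ^ (p - 2) * y = -((-y) ^ (p - 1)) := by
        have := oddpow9 hp (by linarith : (0:ℝ) ≤ -y)
        rw [abs_neg] at this
        nlinarith [this]
      rw [e2]
      have h := twopow9 hx.le (show (0:ℝ) ≤ -y by linarith) hr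
      have he : x + -y = x - y := by ring
      rw [he] at h
      -- (x-y)^{p-1} ≤ 2^{p-2} (x^{p-1} + (-y)^{p-1})
      have hpos : (0:ℝ) < 2 ^ (2 - p) := Real.rpow_pos_of_pos two_pos _
      have hmul : (2:ℝ) ^ (2 - p) * 2 ^ (p - 1 - 1) = 1 := by
        rw [← Real.rpow_add two_pos]
        have he0 : 2 - p + (p - 1 - 1) = 0 := by ring
        rw [he0, Real.rpow_zero]
      nlinarith [Real.rpow_nonneg hx.le (p-1), Real.rpow_nonneg (show (0:ℝ) ≤ -y by linarith) (p-1)]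


lemma core9 (p q : ℝ) (hp : 2 < p) (hq : 0 < q) {A B s₁ s₂ : ℝ}
    (hs₁ : 0 ≤ s₁) (hs : s₁ ≤ s₂) (hAB : s₂ - s₁ ≤ A - B) :
    2 ^ (2 - p) / (max ((q - 1 + p) / p) 1 ^ (p - 1) * max ((q - 1 + p) / p / q) 1) *
      |s₂ ^ ((q - 1 + p) / p) - s₁ ^ ((q - 1 + p) / p)| ^ p ≤
    (|A| ^ (p - 2) * A - |B| ^ (p - 2) * B) * (s₂ ^ q - s₁ ^ q) := by
  have hppos : (0 : ℝ) < p := by linarith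
  set α : ℝ := (q - 1 + p) / p with hα_def
  have hα : 0 < α := div_pos (by linarith) hppos
  set M₁ : ℝ := max α 1 with hM₁_def
  set M₂ : ℝ := max (α / q) 1 with hM₂_def
  have hM₁ : (1 : ℝ) ≤ M₁ := le_max_right _ _
  have hM₂ : (1 : ℝ) ≤ M₂ := le_max_right _ _
  have hM₁p : (0 : ℝ) < M₁ ^ (p - 1) := Real.rpow_pos_of_pos (by linarith) _
  have hcpos : (0 : ℝ) < 2 ^ (2 - p) := Real.rpow_pos_of_pos two_pos _
  have hγpos : (0 : ℝ) < 2 ^ (2 - p) / (M₁ ^ (p - 1) * M₂) :=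
    div_pos hcpos (mul_pos hM₁p (by linarith))
  set γ : ℝ := 2 ^ (2 - p) / (M₁ ^ (p - 1) * M₂) with hγ_def
  rcases eq_or_lt_of_le hs with heq | hlt
  · rw [heq, sub_self, sub_self, abs_zero, mul_zero,
      Real.zero_rpow (by positivity : p ≠ 0), mul_zero]
  · have hs₂ : 0 < s₂ := lt_of_le_of_lt hs₁ hlt
    have hL : 0 < s₂ ^ α - s₁ ^ α := sub_pos.mpr (Real.rpow_lt_rpow hs₁ hlt hα)
    have hQ : 0 < s₂ ^ q - s₁ ^ q := sub_pos.mpr (Real.rpow_lt_rpow hs₁ hlt hq)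
    have hD : 0 < s₂ - s₁ := sub_pos.mpr hlt
    set L : ℝ := s₂ ^ α - s₁ ^ α
    set D : ℝ := s₂ - s₁
    set Q : ℝ := s₂ ^ q - s₁ ^ q
    set X : ℝ := s₂ ^ (α - 1) with hX_def
    set Y : ℝ := s₂ ^ (α - q) with hY_def
    have hXpos : 0 < X := Real.rpow_pos_of_pos hs₂ _
    have hYpos : 0 < Y := Real.rpow_pos_of_pos hs₂ _
    -- step 1
    have h1 : L ≤ M₁ * (X * D) := gap9 hs₁ hs hα
    -- step 2
    have h2 : L ≤ M₂ * (Y * Q) := by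
      have g := gap9 (Real.rpow_nonneg hs₁ q) (Real.rpow_le_rpow hs₁ hs hq.le)
        (div_pos hα hq)
      have e1 : ∀ s : ℝ, 0 ≤ s → (s ^ q) ^ (α / q) = s ^ α := by
        intro s hs0
        rw [← Real.rpow_mul hs0]
        congr 1
        field_simp
      have e2 : (s₂ ^ q) ^ (α / q - 1) = Y := by
        rw [hY_def, ← Real.rpow_mul hs₂.le]
        congr 1
        field_simp
      rw [e1 s₁ hs₁, e1 s₂ hs₂.le, e2] at g
      exact g
    -- step 3
    have h3 : L ^ p ≤ (M₁ * (X * D)) ^ (p - 1) * (M₂ * (Y * Q)) := by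
      have hLp : L ^ p = L ^ (p - 1) * L := by
        rw [← Real.rpow_add_one hL.ne' (p - 1)]; ring_nf
      rw [hLp]
      have ha := Real.rpow_le_rpow hL.le h1 (by linarith : (0:ℝ) ≤ p - 1)
      exact mul_le_mul ha h2 hL.le (Real.rpow_nonneg (by positivity) _)
    -- expand
    have h4 : (M₁ * (X * D)) ^ (p - 1) = M₁ ^ (p - 1) * (X ^ (p - 1) * D ^ (p - 1)) := by
      rw [Real.mul_rpow (by linarith) (by positivity), Real.mul_rpow hXpos.le hD.le]
    have hXY : X ^ (p - 1) * Y = 1 := by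
      rw [hX_def, hY_def, ← Real.rpow_mul hs₂.le, ← Real.rpow_add hs₂]
      have : (α - 1) * (p - 1) + (α - q) = 0 := by
        rw [hα_def]; field_simp; ring
      rw [this, Real.rpow_zero]
    have h5 : L ^ p ≤ M₁ ^ (p - 1) * M₂ * (D ^ (p - 1) * Q) := by
      have he : M₁ ^ (p - 1) * (X ^ (p - 1) * D ^ (p - 1)) * (M₂ * (Y * Q)) =
          M₁ ^ (p - 1) * M₂ * (D ^ (p - 1) * Q) * (X ^ (p - 1) * Y) := by ring
      calc L ^ p ≤ (M₁ * (X * D)) ^ (p - 1) * (M₂ * (Y * Q)) := h3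
        _ = M₁ ^ (p - 1) * M₂ * (D ^ (p - 1) * Q) * (X ^ (p - 1) * Y) := by rw [h4, he]
        _ = M₁ ^ (p - 1) * M₂ * (D ^ (p - 1) * Q) := by rw [hXY, mul_one]
    -- the p-Laplacian side
    have hBA : B ≤ A := by linarith
    have h6 : 2 ^ (2 - p) * D ^ (p - 1) ≤ |A| ^ (p - 2) * A - |B| ^ (p - 2) * B := by
      calc 2 ^ (2 - p) * D ^ (p - 1) ≤ 2 ^ (2 - p) * (A - B) ^ (p - 1) := by
            exact mul_le_mul_of_nonneg_left
              (Real.rpow_le_rpow hD.le hAB (by linarith)) hcpos.le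
        _ ≤ _ := ptmono9 hp hBA
    -- combine
    rw [abs_of_pos hL]
    have hγM : γ * (M₁ ^ (p - 1) * M₂) = 2 ^ (2 - p) :=
      div_mul_cancel₀ _ (by positivity)
    calc γ * L ^ p ≤ γ * (M₁ ^ (p - 1) * M₂ * (D ^ (p - 1) * Q)) :=
          mul_le_mul_of_nonneg_left h5 hγpos.le
      _ = 2 ^ (2 - p) * D ^ (p - 1) * Q := by rw [← mul_assoc, hγM]; ring
      _ ≤ (|A| ^ (p - 2) * A - |B| ^ (p - 2) * B) * Q :=
          mul_le_mul_of_nonneg_right h6 hQ.le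


/-- the monotonicity inequality of Lemma 2.1 (pointwise algebraic
form): for `q > 0`, `p > 2`, `h ≥ 0` there is `γ₀ = γ₀(p,q) > 0` with
`(|a₂-a₁|^{p-2}(a₂-a₁) - |b₂-b₁|^{p-2}(b₂-b₁)) · (((a₂-b₂-h)₊)^q - ((a₁-b₁-h)₊)^q)
  ≥ γ₀ |((a₂-b₂-h)₊)^{(q-1+p)/p} - ((a₁-b₁-h)₊)^{(q-1+p)/p}|^p`. -/
theorem stmt9 (p q : ℝ) (hp : 2 < p) (hq : 0 < q) :
    ∃ γ₀ : ℝ, 0 < γ₀ ∧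
      ∀ h a₁ a₂ b₁ b₂ : ℝ, 0 ≤ h →
        γ₀ * |(max (a₂ - b₂ - h) 0) ^ ((q - 1 + p)/p) -
              (max (a₁ - b₁ - h) 0) ^ ((q - 1 + p)/p)| ^ p ≤
        (|a₂ - a₁| ^ (p - 2) * (a₂ - a₁) - |b₂ - b₁| ^ (p - 2) * (b₂ - b₁)) *
          ((max (a₂ - b₂ - h) 0) ^ q - (max (a₁ - b₁ - h) 0) ^ q) := by
  refine ⟨2 ^ (2 - p) / (max ((q - 1 + p) / p) 1 ^ (p - 1) * max ((q - 1 + p) / p / q) 1),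
    ?_, ?_⟩
  · have hM₁p : (0:ℝ) < max ((q - 1 + p) / p) 1 ^ (p - 1) :=
      Real.rpow_pos_of_pos (lt_of_lt_of_le one_pos (le_max_right _ _)) _
    exact div_pos (Real.rpow_pos_of_pos two_pos _)
      (mul_pos hM₁p (lt_of_lt_of_le one_pos (le_max_right _ _)))
  · intro h a₁ a₂ b₁ b₂ hh
    rcases le_total (a₁ - b₁ - h) (a₂ - b₂ - h) with hle | hle
    · have hmax : max (a₂ - b₂ - h) 0 - max (a₁ - b₁ - h) 0 ≤ (a₂ - a₁) - (b₂ - b₁) := by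
        have h1 := abs_max_sub_max_le_abs (a₂ - b₂ - h) (a₁ - b₁ - h) 0
        rw [abs_of_nonneg (by linarith : (0:ℝ) ≤ (a₂ - b₂ - h) - (a₁ - b₁ - h))] at h1
        have h2 := le_abs_self (max (a₂ - b₂ - h) 0 - max (a₁ - b₁ - h) 0)
        linarith
      exact core9 p q hp hq (le_max_right _ _) (max_le_max hle le_rfl) hmax
    · have hmax : max (a₁ - b₁ - h) 0 - max (a₂ - b₂ - h) 0 ≤ (a₁ - a₂) - (b₁ - b₂) := by
        have h1 := abs_max_sub_max_le_abs (a₁ - b₁ - h) (a₂ - b₂ - h) 0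
        rw [abs_of_nonneg (by linarith : (0:ℝ) ≤ (a₁ - b₁ - h) - (a₂ - b₂ - h))] at h1
        have h2 := le_abs_self (max (a₁ - b₁ - h) 0 - max (a₂ - b₂ - h) 0)
        linarith
      have hc := core9 p q hp hq (A := a₁ - a₂) (B := b₁ - b₂)
        (le_max_right _ _) (max_le_max hle le_rfl) hmax
      rw [abs_sub_comm a₁ a₂, abs_sub_comm b₁ b₂,
        abs_sub_comm (max (a₁ - b₁ - h) 0 ^ ((q - 1 + p) / p))] at hc
      have he : (|a₂ - a₁| ^ (p - 2) * (a₁ - a₂) - |b₂ - b₁| ^ (p - 2) * (b₁ - b₂)) *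
            (max (a₁ - b₁ - h) 0 ^ q - max (a₂ - b₂ - h) 0 ^ q) =
          (|a₂ - a₁| ^ (p - 2) * (a₂ - a₁) - |b₂ - b₁| ^ (p - 2) * (b₂ - b₁)) *
            (max (a₂ - b₂ - h) 0 ^ q - max (a₁ - b₁ - h) 0 ^ q) := by ring
      rw [he] at hc
      exact hc
end
end

section
/- Let p > 2 and q > 0. Then there exists a constant γ > 0, depending only on p and q, such that for all real numbers a, b with 0 ≤ b ≤ a: ( a^{(q−1+p)/p} − b^{(q−1+p)/p} )^p ≤ γ · ( a^q − b^q ) · ( a − b )^{p−1}. -/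
noncomputable section

open Set MeasureTheory

open Real

lemma bern {β t : ℝ} (hβ : 1 ≤ β) (ht0 : 0 ≤ t) :
    1 - t ^ β ≤ β * (1 - t) := by
  have h := one_add_mul_self_le_rpow_one_add (s := t - 1) (by linarith) hβ
  simp only [add_sub_cancel] at h
  nlinarith [h]

lemma key2 {α m t : ℝ} (hα : 0 < α) (hm : 0 < m) (ht0 : 0 ≤ t) (ht1 : t ≤ 1) :
    1 - t ^ α ≤ max 1 (α / m) * (1 - t ^ m) := by
  have htm0 : 0 ≤ t ^ m := rpow_nonneg ht0 m
  have htm1 : t ^ m ≤ 1 := rpow_le_one ht0 ht1 hm.le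
  rcases le_or_gt α m with h | h
  · have hle : t ^ m ≤ t ^ α := by
      rcases eq_or_lt_of_le ht0 with h0 | h0
      · rw [← h0, zero_rpow hα.ne', zero_rpow hm.ne']
      · exact rpow_le_rpow_of_exponent_ge h0 ht1 h
    calc 1 - t ^ α ≤ 1 * (1 - t ^ m) := by linarith
    _ ≤ max 1 (α / m) * (1 - t ^ m) :=
      mul_le_mul_of_nonneg_right (le_max_left _ _) (by linarith)
  · have hβ : 1 ≤ α / m := (one_le_div hm).2 h.le
    have hb := bern hβ htm0
    have he : (t ^ m) ^ (α / m) = t ^ α := by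
      rw [← Real.rpow_mul ht0]; congr 1; field_simp
    rw [he] at hb
    calc 1 - t ^ α ≤ α / m * (1 - t ^ m) := hb
    _ ≤ max 1 (α / m) * (1 - t ^ m) :=
      mul_le_mul_of_nonneg_right (le_max_right _ _) (by linarith)

/-- the elementary Hölder-type inequality: for `p > 2`, `q > 0`
there is `γ = γ(p,q) > 0` such that for all `0 ≤ b ≤ a`,
`(a^{(q-1+p)/p} - b^{(q-1+p)/p})^p ≤ γ (a^q - b^q)(a - b)^{p-1}`. -/
theorem stmt10 (p q : ℝ) (hp : 2 < p) (hq : 0 < q) :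
    ∃ γ : ℝ, 0 < γ ∧
      ∀ a b : ℝ, 0 ≤ b → b ≤ a →
        (a ^ ((q - 1 + p)/p) - b ^ ((q - 1 + p)/p)) ^ p ≤
          γ * (a ^ q - b ^ q) * (a - b) ^ (p - 1) := by
  set α : ℝ := (q - 1 + p) / p with hαdef
  have hp0 : 0 < p := by linarith
  have hα : 0 < α := by
    apply div_pos (by linarith) hp0
  set γ : ℝ := max 1 (α / q) * (max 1 α) ^ (p - 1) with hγdef
  have hc1 : (0:ℝ) < max 1 (α / q) := lt_of_lt_of_le one_pos (le_max_left _ _)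
  have hc2 : (0:ℝ) < max 1 α := lt_of_lt_of_le one_pos (le_max_left _ _)
  have hγ : 0 < γ := mul_pos hc1 (rpow_pos_of_pos hc2 _)
  refine ⟨γ, hγ, ?_⟩
  intro a b hb0 hba
  -- core inequality for t ∈ [0,1]
  have core : ∀ t : ℝ, 0 ≤ t → t ≤ 1 →
      (1 - t ^ α) ^ p ≤ γ * (1 - t ^ q) * (1 - t) ^ (p - 1) := by
    intro t ht0 ht1
    have h1 : 1 - t ^ α ≤ max 1 (α / q) * (1 - t ^ q) := key2 hα hq ht0 ht1
    have h2 : 1 - t ^ α ≤ max 1 α * (1 - t) := by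
      have := key2 hα one_pos ht0 ht1
      simpa using this
    have ha0 : 0 ≤ 1 - t ^ α := by
      have := rpow_le_one ht0 ht1 hα.le; linarith
    have hq0 : 0 ≤ 1 - t ^ q := by
      have := rpow_le_one ht0 ht1 hq.le; linarith
    have ht0' : 0 ≤ 1 - t := by linarith
    rcases eq_or_lt_of_le ha0 with h0 | h0
    · rw [← h0, zero_rpow (by positivity : p ≠ 0)]
      positivity
    · have : (1 - t ^ α) ^ p = (1 - t ^ α) ^ (1:ℝ) * (1 - t ^ α) ^ (p - 1) := by
        rw [← rpow_add h0]; ring_nf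
      rw [this, rpow_one]
      calc (1 - t ^ α) * (1 - t ^ α) ^ (p - 1)
          ≤ (max 1 (α / q) * (1 - t ^ q)) * (max 1 α * (1 - t)) ^ (p - 1) := by
            apply mul_le_mul h1 (rpow_le_rpow ha0 h2 (by linarith))
              (rpow_nonneg ha0 _) (by positivity)
      _ = γ * (1 - t ^ q) * (1 - t) ^ (p - 1) := by
            rw [mul_rpow hc2.le ht0', hγdef]; ring
  rcases eq_or_lt_of_le (hb0.trans hba) with ha | ha
  · have hb : b = 0 := le_antisymm (ha ▸ hba) hb0
    rw [← ha, hb]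
    simp only [sub_self, mul_zero, zero_mul]
    rw [zero_rpow (show p ≠ 0 by positivity)]
  · set t : ℝ := b / a with htdef
    have ht0 : 0 ≤ t := div_nonneg hb0 ha.le
    have ht1 : t ≤ 1 := (div_le_one ha).2 hba
    have hb : b = a * t := by rw [htdef]; field_simp
    have e1 : a ^ α - b ^ α = a ^ α * (1 - t ^ α) := by
      rw [hb, mul_rpow ha.le ht0]; ring
    have e2 : a ^ q - b ^ q = a ^ q * (1 - t ^ q) := by
      rw [hb, mul_rpow ha.le ht0]; ring
    have e3 : a - b = a * (1 - t) := by rw [hb]; ring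
    rw [e1, e2, e3, mul_rpow (rpow_nonneg ha.le α) (by
      have := rpow_le_one ht0 ht1 hα.le; linarith),
      mul_rpow ha.le (by linarith), ← Real.rpow_mul ha.le]
    have hαp : α * p = q + (p - 1) := by
      rw [hαdef]; field_simp; ring
    rw [hαp, rpow_add ha]
    calc a ^ q * a ^ (p - 1) * (1 - t ^ α) ^ p
        ≤ a ^ q * a ^ (p - 1) * (γ * (1 - t ^ q) * (1 - t) ^ (p - 1)) := by
          apply mul_le_mul_of_nonneg_left (core t ht0 ht1) (by positivity)
    _ = γ * (a ^ q * (1 - t ^ q)) * (a ^ (p - 1) * (1 - t) ^ (p - 1)) := by ring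
end
end

section
/- Let p > 2, r ≥ 1, and let Λ : (0,∞) → (0,∞) be nonincreasing. Suppose that ψ_r(s) = s^{(p−2)/r} Λ(s^{−1}) (s > 0) is an increasing bijection of (0,∞) onto itself with inverse ψ_r^{(−1)}. Then for each fixed s > 0 the function a ↦ a · [ ψ_r^{(−1)}( s a^{−(p−2)} ) ]^{1/r} is nondecreasing on (0,∞). -/
noncomputable section

open Set MeasureTheory

/-- Remark 1.9: for nonincreasing `Λ`, the map
`a ↦ a · [ψ_r⁻¹(s a^{-(p-2)})]^{1/r}` is nondecreasing on `(0,∞)` for every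
fixed `s > 0`. -/
theorem stmt17 (p r : ℝ) (hp : 2 < p) (hr : 1 ≤ r)
    (Λ ψinv : ℝ → ℝ)
    (hΛ : AntitoneOn Λ (Ioi 0)) (hΛpos : ∀ v, 0 < v → 0 < Λ v)
    (hψ : IsPsiInv p r Λ ψinv) :
    ∀ s, 0 < s → ∀ a₁ a₂ : ℝ, 0 < a₁ → a₁ ≤ a₂ →
      a₁ * (ψinv (s * a₁ ^ (-(p - 2)))) ^ (1/r) ≤
        a₂ * (ψinv (s * a₂ ^ (-(p - 2)))) ^ (1/r) := by
  obtain ⟨hmono, hpos, hinvpos, hright, hleft⟩ := hψ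
  intro s hs a₁ a₂ ha₁ h12
  have hr0 : 0 < r := lt_of_lt_of_le one_pos hr
  have hp2 : 0 < p - 2 := by linarith
  have ha₂ : 0 < a₂ := lt_of_lt_of_le ha₁ h12
  set b₁ := ψinv (s * a₁ ^ (-(p - 2))) with hb₁def
  set b₂ := ψinv (s * a₂ ^ (-(p - 2))) with hb₂def
  have hs₁ : 0 < s * a₁ ^ (-(p - 2)) := mul_pos hs (Real.rpow_pos_of_pos ha₁ _)
  have hs₂ : 0 < s * a₂ ^ (-(p - 2)) := mul_pos hs (Real.rpow_pos_of_pos ha₂ _)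
  have hb₁ : 0 < b₁ := hinvpos _ hs₁
  have hb₂ : 0 < b₂ := hinvpos _ hs₂
  have key : ∀ a b : ℝ, 0 < a → 0 < b → psi p r Λ b = s * a ^ (-(p - 2)) →
      (a * b ^ (1/r)) ^ (p - 2) * Λ b⁻¹ = s := by
    intro a b ha hb hpsi
    have h1 : (a * b ^ (1/r)) ^ (p - 2) = a ^ (p - 2) * b ^ ((p - 2)/r) := by
      rw [Real.mul_rpow ha.le (Real.rpow_nonneg hb.le _),
        ← Real.rpow_mul hb.le]
      ring_nf
    have h2 : a ^ (p - 2) * (s * a ^ (-(p - 2))) = s := by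
      rw [mul_comm s, ← mul_assoc, ← Real.rpow_add ha]
      simp
    calc (a * b ^ (1/r)) ^ (p - 2) * Λ b⁻¹
        = a ^ (p - 2) * (b ^ ((p - 2)/r) * Λ b⁻¹) := by rw [h1]; ring
      _ = a ^ (p - 2) * psi p r Λ b := rfl
      _ = s := by rw [hpsi]; exact h2
  have e₁ := key a₁ b₁ ha₁ hb₁ (hright _ hs₁)
  have e₂ := key a₂ b₂ ha₂ hb₂ (hright _ hs₂)
  by_contra hcon
  push_neg at hcon
  have hx₂ : 0 < a₂ * b₂ ^ (1/r) := mul_pos ha₂ (Real.rpow_pos_of_pos hb₂ _)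
  have hx₁ : 0 < a₁ * b₁ ^ (1/r) := lt_trans hx₂ hcon
  have hbb : b₂ ≤ b₁ := by
    by_contra hbb
    push_neg at hbb
    have : a₁ * b₁ ^ (1/r) ≤ a₂ * b₂ ^ (1/r) :=
      mul_le_mul h12 (Real.rpow_le_rpow hb₁.le hbb.le (by positivity))
        (by positivity) ha₂.le
    linarith
  have hΛle : Λ b₂⁻¹ ≤ Λ b₁⁻¹ :=
    hΛ (mem_Ioi.mpr (inv_pos.mpr hb₁)) (mem_Ioi.mpr (inv_pos.mpr hb₂))
      (inv_anti₀ hb₂ hbb)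
  have hΛ2pos : 0 < Λ b₂⁻¹ := hΛpos _ (inv_pos.mpr hb₂)
  have hpow : (a₂ * b₂ ^ (1/r)) ^ (p - 2) < (a₁ * b₁ ^ (1/r)) ^ (p - 2) :=
    Real.rpow_lt_rpow hx₂.le hcon hp2
  have hpow₂ : 0 < (a₂ * b₂ ^ (1/r)) ^ (p - 2) := Real.rpow_pos_of_pos hx₂ _
  nlinarith [mul_lt_mul_of_pos_right hpow hΛ2pos,
    mul_le_mul_of_nonneg_left hΛle (Real.rpow_pos_of_pos hx₁ (p-2)).le]
end
end

section
/- Suppose additionally there is c₀ > 0 with Λ_p(μ_ω(B_n(x₀))) ≥ c₀ n^{−p} for every integer n ≥ 1. Then for every c ≥ 1 there is a constant γ > 0, depending only on c, c₀, N and p, such that: if R ≥ 1 and s > 0 satisfy R^p = c s · [ ψ₁^{(−1)}(s^{−1}) ]^{p−2}, then μ_ω(B_{⌊R⌋}(x₀)) ≤ γ · [ ψ₁^{(−1)}(s^{−1}) ]^{−1}. -/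
noncomputable section

open Set MeasureTheory

/-- Lemma 2.8: under the volume lower bound
`Λ_p(μ_ω(B_n(x₀))) ≥ c₀ n^{-p}`, if `R^p = c s [ψ₁⁻¹(s⁻¹)]^{p-2}` with `c ≥ 1`
then `μ_ω(B_{⌊R⌋}(x₀)) ≤ γ [ψ₁⁻¹(s⁻¹)]⁻¹`. -/
theorem stmt19 (p N ϖ c₀ c : ℝ) (hp : 2 < p) (hN : 0 < N) (hϖ : 0 < ϖ)
    (hc₀ : 0 < c₀) (hc : 1 ≤ c) :
    ∃ γ : ℝ, 0 < γ ∧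
      ∀ (V : Type) (g : WG V) (x₀ : V) (Λ ψinv : ℝ → ℝ),
        FKfun p N ϖ Λ → IsPsiInv p 1 Λ ψinv →
        (∀ n : ℕ, 1 ≤ n → c₀ * (n : ℝ) ^ (-p) ≤ Λ (g.mu (g.ball x₀ n))) →
        ∀ R s : ℝ, 1 ≤ R → 0 < s →
          R ^ p = c * s * (ψinv s⁻¹) ^ (p - 2) →
          g.mu (g.ball x₀ (Nat.floor R)) ≤ γ * (ψinv s⁻¹)⁻¹ := by
  have hc0 : 0 < c := lt_of_lt_of_le one_pos hc
  set K : ℝ := (c / c₀) ^ (N / p) with hK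
  have hKpos : 0 < K := Real.rpow_pos_of_pos (div_pos hc0 hc₀) _
  refine ⟨max 1 K, lt_max_of_lt_left one_pos, ?_⟩
  intro V g x₀ Λ ψinv hFK hPsi hvol R s hR hs hRs
  set b : ℝ := ψinv s⁻¹ with hbdef
  have hsinv : (0:ℝ) < s⁻¹ := inv_pos.2 hs
  have hb : 0 < b := hPsi.2.2.1 _ hsinv
  set m : ℝ := g.mu (g.ball x₀ (Nat.floor R)) with hmdef
  have hm0 : 0 ≤ m := by
    apply tsum_nonneg
    intro x
    exact tsum_nonneg fun y => g.nonneg _ _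
  have hbinv : 0 < b⁻¹ := inv_pos.2 hb
  have hp0 : (0:ℝ) < p := lt_trans two_pos hp
  -- Either m < b⁻¹ (trivial) or b⁻¹ ≤ m
  rcases lt_or_ge m b⁻¹ with hlt | hle
  · calc m ≤ b⁻¹ := le_of_lt hlt
      _ = 1 * b⁻¹ := (one_mul _).symm
      _ ≤ max 1 K * b⁻¹ := by
          exact mul_le_mul_of_nonneg_right (le_max_left _ _) (le_of_lt hbinv)
  · -- main case
    have hmpos : 0 < m := lt_of_lt_of_le hbinv hle
    -- Λ b⁻¹ positive and b^(p-2) * Λ b⁻¹ = s⁻¹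
    have hA : 0 < Λ b⁻¹ := hFK.2.2.1 _ hbinv
    have hAe : b ^ (p - 2) * Λ b⁻¹ = s⁻¹ := by
      have := hPsi.2.2.2.1 _ hsinv
      simpa [psi, hbdef] using this
    -- floor bound
    have hn1 : 1 ≤ Nat.floor R := Nat.le_floor (by exact_mod_cast hR)
    have hnR : (Nat.floor R : ℝ) ≤ R := Nat.floor_le (le_trans zero_le_one hR)
    have hnpos : (0:ℝ) < (Nat.floor R : ℝ) := by exact_mod_cast hn1
    have hRpos : (0:ℝ) < R := lt_of_lt_of_le one_pos hR
    -- c₀ * R^(-p) ≤ Λ m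
    have hmono : R ^ (-p) ≤ (Nat.floor R : ℝ) ^ (-p) := by
      rw [Real.rpow_neg (le_of_lt hRpos), Real.rpow_neg (le_of_lt hnpos)]
      apply inv_anti₀ (Real.rpow_pos_of_pos hnpos _)
      exact Real.rpow_le_rpow (le_of_lt hnpos) hnR (le_of_lt hp0)
    have hΛm : c₀ * R ^ (-p) ≤ Λ m := by
      calc c₀ * R ^ (-p) ≤ c₀ * (Nat.floor R : ℝ) ^ (-p) := by
            exact mul_le_mul_of_nonneg_left hmono (le_of_lt hc₀)
        _ ≤ Λ m := hvol _ hn1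
    -- rewrite c₀ * R^(-p) = (c₀ / c) * Λ b⁻¹
    have hbp2 : (0:ℝ) < b ^ (p - 2) := Real.rpow_pos_of_pos hb _
    have hkey : c₀ * R ^ (-p) = (c₀ / c) * Λ b⁻¹ := by
      rw [Real.rpow_neg (le_of_lt hRpos), hRs]
      have hΛbe : Λ b⁻¹ = s⁻¹ / b ^ (p - 2) := by
        rw [eq_div_iff (ne_of_gt hbp2)]
        linear_combination hAe
      rw [hΛbe]
      rw [mul_inv, mul_inv]
      field_simp
    have hAB : (c₀ / c) * Λ b⁻¹ ≤ Λ m := hkey ▸ hΛm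
    have hB : 0 < Λ m := lt_of_lt_of_le (mul_pos (div_pos hc₀ hc0) hA) hAB
    -- FK monotonicity
    have h1 := hFK.2.2.2.1 b⁻¹ m hbinv hle
    -- derive m^(p/N) * b^(p/N) ≤ c / c₀
    have hq : (0:ℝ) < p / N := div_pos hp0 hN
    have hbq : (b⁻¹ : ℝ) ^ (-(p/N)) = b ^ (p/N) := by
      rw [Real.inv_rpow (le_of_lt hb), Real.rpow_neg (le_of_lt hb), inv_inv]
    rw [hbq] at h1
    have h2 : m ^ (p/N) * b ^ (p/N) ≤ Λ b⁻¹ / Λ m := by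
      have hmq : 0 < m ^ (p/N) := Real.rpow_pos_of_pos hmpos _
      have := mul_le_mul_of_nonneg_left h1 (le_of_lt (mul_pos hA hmq))
      calc m ^ (p/N) * b ^ (p/N)
          = Λ b⁻¹ * m ^ (p/N) * ((Λ b⁻¹)⁻¹ * b ^ (p/N)) := by
            rw [show Λ b⁻¹ * m ^ (p/N) * ((Λ b⁻¹)⁻¹ * b ^ (p/N))
                = (Λ b⁻¹ * (Λ b⁻¹)⁻¹) * (m ^ (p/N) * b ^ (p/N)) from by ring,
              mul_inv_cancel₀ (ne_of_gt hA), one_mul]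
        _ ≤ Λ b⁻¹ * m ^ (p/N) * ((Λ m)⁻¹ * m ^ (-(p/N))) := this
        _ = Λ b⁻¹ / Λ m * (m ^ (p/N) * m ^ (-(p/N))) := by ring
        _ = Λ b⁻¹ / Λ m := by
            rw [← Real.rpow_add hmpos]
            norm_num
    have h3 : Λ b⁻¹ / Λ m ≤ c / c₀ := by
      rw [div_le_div_iff₀ hB hc₀]
      have := mul_le_mul_of_nonneg_left hAB (le_of_lt hc0)
      calc Λ b⁻¹ * c₀
          = c * ((c₀ / c) * Λ b⁻¹) := by field_simp
        _ ≤ c * Λ m := this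
    have h4 : (m * b) ^ (p/N) ≤ c / c₀ := by
      rw [Real.mul_rpow hm0 (le_of_lt hb)]
      exact le_trans h2 h3
    have h5 : m * b ≤ K := by
      have := Real.rpow_le_rpow (Real.rpow_nonneg (mul_nonneg hm0 (le_of_lt hb)) _)
        h4 (le_of_lt (inv_pos.2 hq))
      rwa [Real.rpow_rpow_inv (mul_nonneg hm0 (le_of_lt hb)) (ne_of_gt hq),
        inv_div, ← hK] at this
    calc m = m * b * b⁻¹ := by field_simp
      _ ≤ K * b⁻¹ := mul_le_mul_of_nonneg_right h5 (le_of_lt hbinv)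
      _ ≤ max 1 K * b⁻¹ := mul_le_mul_of_nonneg_right (le_max_right _ _) (le_of_lt hbinv)
end
end
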